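/- Let I₁ > I₂ > I₃ > 0 and let (h,c) satisfy hI₃ < c < hI₂ (so that 0 < k² < 1 where k² = (hI₃ - c)(I₁ - I₂) / ((hI₁ - c)(I₃ - I₂))). Then the curve γ(t) = (a·cn(ωt; k), b·sn(ωt; k), -d·dn(ωt; k)) with a = √(2I₁(c - hI₃)/(I₁ - I₃)), b = √(2I₂(c - hI₃)/(I₂ - I₃)), d = √(2I₃(hI₁ - c)/(I₁ - I₃)), ω = √(2(I₂ - I₃)(hI₁ - c)/(I₁I₂I₃)), satisfies F₁(γ(t)) = h and F₂(γ(t)) = c for all t, where F₁(x,y,z) = (1/2)(x²/I₁ + y²/I₂ + z²/I₃) and F₂(x,y,z) = (1/2)(x² + y² + z²). -/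

import Mathlib

set_option maxHeartbeats 1600000


open Real

theorem rigid_body_orbit_lies_on_level_sets
    (I₁ I₂ I₃ : ℝ) (h12 : I₂ < I₁) (h23 : I₃ < I₂) (h3 : 0 < I₃)
    (h c : ℝ) (hc1 : h * I₃ < c) (hc2 : c < h * I₂)
    (k : ℝ)
    (hk : k ^ 2 = (h * I₃ - c) * (I₁ - I₂) / ((h * I₁ - c) * (I₃ - I₂)))
    (sn cn dn : ℝ → ℝ)
    (hsncn : ∀ t, sn t ^ 2 + cn t ^ 2 = 1)
    (hdn : ∀ t, dn t ^ 2 + k ^ 2 * sn t ^ 2 = 1)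
    (a b d ω : ℝ)
    (ha : a = Real.sqrt (2 * I₁ * (c - h * I₃) / (I₁ - I₃)))
    (hb : b = Real.sqrt (2 * I₂ * (c - h * I₃) / (I₂ - I₃)))
    (hd : d = Real.sqrt (2 * I₃ * (h * I₁ - c) / (I₁ - I₃)))
    (hω : ω = Real.sqrt (2 * (I₂ - I₃) * (h * I₁ - c) / (I₁ * I₂ * I₃)))
    (γ : ℝ → ℝ × ℝ × ℝ)
    (hγ : ∀ t, γ t = (a * cn (ω * t), b * sn (ω * t), -(d * dn (ω * t))))
    (F₁ F₂ : ℝ × ℝ × ℝ → ℝ)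
    (hF₁ : ∀ p : ℝ × ℝ × ℝ,
      F₁ p = (1 / 2) * (p.1 ^ 2 / I₁ + p.2.1 ^ 2 / I₂ + p.2.2 ^ 2 / I₃))
    (hF₂ : ∀ p : ℝ × ℝ × ℝ,
      F₂ p = (1 / 2) * (p.1 ^ 2 + p.2.1 ^ 2 + p.2.2 ^ 2)) :
    ∀ t, F₁ (γ t) = h ∧ F₂ (γ t) = c := by
  have h2 : 0 < I₂ := h3.trans h23
  have h1 : 0 < I₁ := h2.trans h12
  have hpos : 0 < h := by nlinarith
  have hc3 : c < h * I₁ := by nlinarith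
  have h13 : (0:ℝ) < I₁ - I₃ := by linarith
  have h23' : (0:ℝ) < I₂ - I₃ := by linarith
  have ha2 : a ^ 2 = 2 * I₁ * (c - h * I₃) / (I₁ - I₃) := by
    rw [ha, sq_sqrt (by apply div_nonneg <;> nlinarith)]
  have hb2 : b ^ 2 = 2 * I₂ * (c - h * I₃) / (I₂ - I₃) := by
    rw [hb, sq_sqrt (by apply div_nonneg <;> nlinarith)]
  have hd2 : d ^ 2 = 2 * I₃ * (h * I₁ - c) / (I₁ - I₃) := by
    rw [hd, sq_sqrt (by apply div_nonneg <;> nlinarith)]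
  have hk2 : k ^ 2 = (c - h * I₃) * (I₁ - I₂) / ((h * I₁ - c) * (I₂ - I₃)) := by
    rw [hk]; rw [div_eq_div_iff] <;> nlinarith
  have hne : (h * I₁ - c) * (I₂ - I₃) ≠ 0 := ne_of_gt (by nlinarith)
  intro t
  have hcn : cn (ω * t) ^ 2 = 1 - sn (ω * t) ^ 2 := by
    have := hsncn (ω * t); linarith
  have hdn' : dn (ω * t) ^ 2 = 1 - k ^ 2 * sn (ω * t) ^ 2 := by
    have := hdn (ω * t); linarith
  rw [hγ, hF₁, hF₂]
  simp only [mul_pow, neg_sq, hcn, hdn', hk2, ha2, hb2, hd2]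
  constructor <;>
  · field_simp [hne, (show (0:ℝ) < I₁ * h - c by nlinarith).ne']
    ring
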